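/- Let a, b, m, n : ℤ → ℝ be a positive solution of the ABMN system on ℤ and set x = φ_0 = (n_{−1} − n_0)/(m_0 − m_{−1}). Then for every k ∈ ℕ and every integer ℓ ≥ 1, (n_{−ℓ} − n_k)/(m_k − m_{−ℓ}) = x·(S_k(x) + T_ℓ(x))/(P_k(x) + Q_ℓ(x)). -/

import Mathlib

/-- The ABMN system on ℤ. -/
def IsABMN (a b m n : ℤ → ℝ) : Prop :=
  (∀ i, 0 ≤ a i) ∧ (∀ i, 0 ≤ b i) ∧
  (∀ i : ℤ, (a i + b i) * (m i + a i) = a i * m (i + 1) + b i * m (i - 1)) ∧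
  (∀ i : ℤ, (a i + b i) * (n i + b i) = a i * n (i + 1) + b i * n (i - 1)) ∧
  (∀ i : ℤ, (a i + b i) ^ 2 = b i * (m (i + 1) - m (i - 1))) ∧
  (∀ i : ℤ, (a i + b i) ^ 2 = a i * (n (i - 1) - n (i + 1)))

/-- `ω(x) = √(8x+1)`. -/
noncomputable def wF (x : ℝ) : ℝ := Real.sqrt (8 * x + 1)

/-- `c(x) = (ω+3)²/16`. -/
noncomputable def cF (x : ℝ) : ℝ := (wF x + 3) ^ 2 / 16

/-- `d(x) = (ω+3)²/(8(ω+1))`. -/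
noncomputable def dF (x : ℝ) : ℝ := (wF x + 3) ^ 2 / (8 * (wF x + 1))

/-- `s(x) = (ω−1)²/(4(ω+7))`. -/
noncomputable def sF (x : ℝ) : ℝ := (wF x - 1) ^ 2 / (4 * (wF x + 7))

/-- `s₋₁(x) = 1/s(1/x)`, the inverse of `s`. -/
noncomputable def sFinv (x : ℝ) : ℝ := 1 / sF (1 / x)

/-- The ℤ-indexed iterates of `s`. -/
noncomputable def sIter (k : ℤ) (x : ℝ) : ℝ :=
  if 0 ≤ k then sF^[k.toNat] x else sFinv^[(-k).toNat] x

/-- `P₀ = 1` and `P_{k+1} − P_k = ∏_{i=0}^{k} (c_i(x) − 1)`. -/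
noncomputable def Pfun (x : ℝ) : ℕ → ℝ
  | 0 => 1
  | k + 1 => Pfun x k + ∏ i ∈ Finset.range (k + 1), (cF (sIter i x) - 1)

/-- `S₀ = 1` and `S_{k+1} − S_k = ∏_{i=0}^{k} (d_i(x) − 1)`. -/
noncomputable def Sfun (x : ℝ) : ℕ → ℝ
  | 0 => 1
  | k + 1 => Sfun x k + ∏ i ∈ Finset.range (k + 1), (dF (sIter i x) - 1)

/-- `Q₁ = 0` and `Q_{k+1} − Q_k = ∏_{i=1}^{k} (c_{−i}(x) − 1)⁻¹` for `k ≥ 1`. -/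
noncomputable def Qfun (x : ℝ) : ℕ → ℝ
  | 0 => 0
  | 1 => 0
  | k + 2 => Qfun x (k + 1) + ∏ i ∈ Finset.range (k + 1), (cF (sIter (-((i : ℤ) + 1)) x) - 1)⁻¹

/-- `T₁ = 0` and `T_{k+1} − T_k = ∏_{i=1}^{k} (d_{−i}(x) − 1)⁻¹` for `k ≥ 1`. -/
noncomputable def Tfun (x : ℝ) : ℕ → ℝ
  | 0 => 0
  | 1 => 0
  | k + 2 => Tfun x (k + 1) + ∏ i ∈ Finset.range (k + 1), (dF (sIter (-((i : ℤ) + 1)) x) - 1)⁻¹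

/-- The finite-trail Mina margin map `M_{ℓ,k}(x) = x(S_k + T_ℓ)/(P_k + Q_ℓ)`. -/
noncomputable def Mfin (l k : ℕ) (x : ℝ) : ℝ :=
  x * (Sfun x k + Tfun x l) / (Pfun x k + Qfun x l)

/- ### Auxiliary lemmas -/

lemma wF_sq' {x : ℝ} (hx : 0 < x) : (wF x)^2 = 8*x+1 := Real.sq_sqrt (by linarith)

lemma wF_gt_one' {x : ℝ} (hx : 0 < x) : 1 < wF x := by
  have h := Real.sq_sqrt (show (0:ℝ) ≤ 8*x+1 by linarith)
  have h2 := Real.sqrt_nonneg (8*x+1)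
  unfold wF
  nlinarith [h, h2]

lemma sF_pos' {x : ℝ} (hx : 0 < x) : 0 < sF x := by
  have h1 := wF_gt_one' hx
  unfold sF
  exact div_pos (by nlinarith) (by linarith)

lemma sFinv_sF' {t : ℝ} (ht : 0 < t) : sFinv (sF t) = t := by
  have h1 := wF_gt_one' ht
  have h2 := wF_sq' ht
  have hs := sF_pos' ht
  set w := wF t with hwdef
  have hw1 : (0:ℝ) < w - 1 := by linarith
  have hsval : sF t = (w - 1)^2 / (4*(w+7)) := rfl
  have hw' : wF (1 / sF t) = (w + 15)/(w - 1) := by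
    unfold wF
    rw [show 8 * (1 / sF t) + 1 = ((w+15)/(w-1))^2 by
      rw [hsval]; field_simp; ring]
    exact Real.sqrt_sq (by positivity)
  have key : sF (1 / sF t) = 1 / t := by
    rw [sF, hw']
    rw [div_eq_div_iff (by positivity) (by positivity)]
    field_simp
    nlinarith [h2]
  rw [sFinv, key]
  field_simp

lemma abmn_site (a b u1 u2 v1 v2 : ℝ) (ha : 0 < a) (hb : 0 < b)
    (hu1 : 0 < u1) (hv1 : 0 < v1)
    (h1 : a*u2 - b*u1 = a*(a+b))
    (h2 : b*v1 - a*v2 = b*(a+b))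
    (h3 : (a+b)^2 = b*(u2+u1))
    (h4 : (a+b)^2 = a*(v2+v1)) :
    u2 = (cF (v1/u1) - 1) * u1 ∧ v2 = (dF (v1/u1) - 1) * v1 ∧ v2/u2 = sF (v1/u1) := by
  have hab : 0 < a + b := by linarith
  have key1 : b * u1 = a^2 := by
    have h : (a+b) * (b*u1) = (a+b) * a^2 := by linear_combination (-b)*h1 + (-a)*h3
    exact mul_left_cancel₀ (by positivity) h
  have key2 : v1 = a + 2*b := by
    have h : v1 * (a+b) = (a+2*b) * (a+b) := by linear_combination h2 - h4
    exact mul_right_cancel₀ (by positivity) h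
  have key3 : a * v2 = b^2 := by linear_combination (-1)*h2 + b*key2
  have hu2 : u2 = 2*a + a^2/u1 := by
    have : a * u2 = a * (2*a + a^2/u1) := by
      field_simp
      apply mul_left_cancel₀ ha.ne'
      linear_combination u1*h1 + (u1+a)*key1
    exact mul_left_cancel₀ (by positivity) this
  have hv2 : v2 = a^3 / u1^2 := by
    have : a * v2 = a * (a^3/u1^2) := by
      rw [key3]
      field_simp
      linear_combination (a^2 + b*u1)*key1
    exact mul_left_cancel₀ (by positivity) this
  have hbval : b = a^2/u1 := by field_simp; linear_combination key1
  have hw : wF (v1/u1) = 4*a/u1 + 1 := by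
    unfold wF
    rw [show 8 * (v1/u1) + 1 = (4*a/u1 + 1)^2 by
      rw [key2, hbval]; field_simp; ring]
    exact Real.sqrt_sq (by positivity)
  refine ⟨?_, ?_, ?_⟩
  · rw [cF, hw, hu2]; field_simp; ring
  · rw [dF, hw, hv2, key2, hbval]
    field_simp
    ring
  · rw [sF, hw, hv2, hu2]
    have h2a : 0 < 2*a + a^2/u1 := by positivity
    field_simp
    ring

lemma abmn_upos (a b m n : ℤ → ℝ) (h : IsABMN a b m n)
    (ha : ∀ i, 0 < a i) (hb : ∀ i, 0 < b i) : ∀ i : ℤ, 0 < m (i + 1) - m i := by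
  obtain ⟨-, -, e1, e2, e3, e4⟩ := h
  intro i
  by_contra hle
  push_neg at hle
  have h1 := e1 i
  have h3 := e3 i
  have habs : 0 < a i + b i := by linarith [ha i, hb i]
  have hup : 0 < m i - m (i-1) := by nlinarith [mul_pos habs habs, hb i]
  nlinarith [mul_pos (hb i) hup, mul_pos (ha i) habs,
    mul_nonpos_of_nonneg_of_nonpos (le_of_lt (ha i)) hle]

lemma abmn_vpos (a b m n : ℤ → ℝ) (h : IsABMN a b m n)
    (ha : ∀ i, 0 < a i) (hb : ∀ i, 0 < b i) : ∀ i : ℤ, 0 < n i - n (i + 1) := by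
  obtain ⟨-, -, e1, e2, e3, e4⟩ := h
  intro i
  by_contra hle
  push_neg at hle
  have h2 := e2 (i+1)
  have h4 := e4 (i+1)
  simp only [add_sub_cancel_right] at h2 h4
  have habs : 0 < a (i+1) + b (i+1) := by linarith [ha (i+1), hb (i+1)]
  have hvp : 0 < n (i+1) - n (i+1+1) := by nlinarith [mul_pos habs habs, ha (i+1)]
  nlinarith [mul_pos (ha (i+1)) hvp, mul_pos (hb (i+1)) habs,
    mul_nonpos_of_nonneg_of_nonpos (le_of_lt (hb (i+1))) hle]

/-- For a positive ABMN solution with `x = φ₀ = (n₋₁ − n₀)/(m₀ − m₋₁)`, the ratio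
`(n₋ℓ − n_k)/(m_k − m₋ℓ)` equals `x(S_k(x) + T_ℓ(x))/(P_k(x) + Q_ℓ(x))`. -/
theorem abmn_ratio_formula (a b m n : ℤ → ℝ) (h : IsABMN a b m n)
    (ha : ∀ i, 0 < a i) (hb : ∀ i, 0 < b i)
    (x : ℝ) (hx : x = (n (-1) - n 0) / (m 0 - m (-1))) :
    ∀ k : ℕ, ∀ l : ℕ, 1 ≤ l →
      (n (-(l : ℤ)) - n (k : ℤ)) / (m (k : ℤ) - m (-(l : ℤ)))
        = x * (Sfun x k + Tfun x l) / (Pfun x k + Qfun x l) := by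
  have hU := abmn_upos a b m n h ha hb
  have hV := abmn_vpos a b m n h ha hb
  obtain ⟨-, -, e1, e2, e3, e4⟩ := h
  -- increments at j-1
  have hU' : ∀ j : ℤ, 0 < m j - m (j-1) := by
    intro j; have := hU (j-1); rwa [sub_add_cancel] at this
  have hV' : ∀ j : ℤ, 0 < n (j-1) - n j := by
    intro j; have := hV (j-1); rwa [sub_add_cancel] at this
  have phi_pos : ∀ j : ℤ, 0 < (n (j-1) - n j) / (m j - m (j-1)) :=
    fun j => div_pos (hV' j) (hU' j)
  -- the site lemma at every j
  have site_all : ∀ j : ℤ,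
      m (j+1) - m j = (cF ((n (j-1) - n j)/(m j - m (j-1))) - 1) * (m j - m (j-1)) ∧
      n j - n (j+1) = (dF ((n (j-1) - n j)/(m j - m (j-1))) - 1) * (n (j-1) - n j) ∧
      (n j - n (j+1))/(m (j+1) - m j) = sF ((n (j-1) - n j)/(m j - m (j-1))) := by
    intro j
    exact abmn_site (a j) (b j) (m j - m (j-1)) (m (j+1) - m j) (n (j-1) - n j) (n j - n (j+1))
      (ha j) (hb j) (hU' j) (hV' j)
      (by linear_combination (-1) * e1 j) (by linear_combination (-1) * e2 j)
      (by linear_combination e3 j) (by linear_combination e4 j)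
  -- x = φ 0
  have hx0 : x = (n (0-1 : ℤ) - n 0) / (m 0 - m (0-1 : ℤ)) := by norm_num [hx]
  -- sIter computes φ
  have fwd : ∀ N : ℕ, sF^[N] x = (n ((N:ℤ)-1) - n (N:ℤ)) / (m (N:ℤ) - m ((N:ℤ)-1)) := by
    intro N
    induction N with
    | zero => simpa using hx0
    | succ N ih =>
      rw [Function.iterate_succ_apply', ih]
      have := (site_all (N:ℤ)).2.2
      push_cast
      rw [← this]
      congr 1 <;> [skip; skip] <;> ring_nf
  have bwd : ∀ N : ℕ, sFinv^[N] x
      = (n ((-N:ℤ)-1) - n (-N:ℤ)) / (m (-N:ℤ) - m ((-N:ℤ)-1)) := by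
    intro N
    induction N with
    | zero => simpa using hx0
    | succ N ih =>
      rw [Function.iterate_succ_apply', ih]
      have hstep := (site_all ((-N:ℤ)-1)).2.2
      have hidx : ((-N:ℤ)-1) + 1 = (-N:ℤ) := by ring
      rw [hidx] at hstep
      have : (n ((-N:ℤ)-1) - n (-N:ℤ)) / (m (-N:ℤ) - m ((-N:ℤ)-1))
          = sF ((n ((-N:ℤ)-1-1) - n ((-N:ℤ)-1)) / (m ((-N:ℤ)-1) - m ((-N:ℤ)-1-1))) := hstep
      rw [this, sFinv_sF' (phi_pos ((-N:ℤ)-1))]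
      push_cast
      congr 1 <;> [skip; skip] <;> ring_nf
  have hsI : ∀ j : ℤ, sIter j x = (n (j-1) - n j) / (m j - m (j-1)) := by
    intro j
    rw [sIter]
    split_ifs with hj
    · have := fwd j.toNat
      rwa [Int.toNat_of_nonneg hj] at this
    · have := bwd (-j).toNat
      rwa [Int.toNat_of_nonneg (by omega), neg_neg] at this
  -- ratio steps in terms of sIter
  have cstep : ∀ j : ℤ, m (j+1) - m j = (cF (sIter j x) - 1) * (m j - m (j-1)) := by
    intro j; rw [hsI j]; exact (site_all j).1
  have dstep : ∀ j : ℤ, n j - n (j+1) = (dF (sIter j x) - 1) * (n (j-1) - n j) := by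
    intro j; rw [hsI j]; exact (site_all j).2.1
  have cpos : ∀ j : ℤ, 0 < cF (sIter j x) - 1 := by
    intro j
    have h1 := cstep j
    have h2 := hU j
    have h3 := hU' j
    nlinarith [h1, h2, h3]
  have dpos : ∀ j : ℤ, 0 < dF (sIter j x) - 1 := by
    intro j
    have h1 := dstep j
    have h2 := hV j
    have h3 := hV' j
    nlinarith [h1, h2, h3]
  -- forward products
  have prodC : ∀ k : ℕ, m ((k:ℤ)+1) - m (k:ℤ)
      = (m 0 - m (-1)) * ∏ i ∈ Finset.range (k+1), (cF (sIter i x) - 1) := by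
    intro k
    induction k with
    | zero =>
      rw [Finset.prod_range_one]
      have := cstep 0
      norm_num at this ⊢
      linarith [this]
    | succ k ih =>
      rw [Finset.prod_range_succ, ← mul_assoc]
      have hc := cstep ((k:ℤ)+1)
      push_cast at hc ⊢
      rw [hc]
      rw [show ((k:ℤ)+1-1) = (k:ℤ) by ring, ih]
      ring
  have prodD : ∀ k : ℕ, n (k:ℤ) - n ((k:ℤ)+1)
      = (n (-1) - n 0) * ∏ i ∈ Finset.range (k+1), (dF (sIter i x) - 1) := by
    intro k
    induction k with
    | zero =>
      rw [Finset.prod_range_one]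
      have := dstep 0
      norm_num at this ⊢
      linarith [this]
    | succ k ih =>
      rw [Finset.prod_range_succ, ← mul_assoc]
      have hd := dstep ((k:ℤ)+1)
      push_cast at hd ⊢
      rw [hd]
      rw [show ((k:ℤ)+1-1) = (k:ℤ) by ring, ih]
      ring
  -- backward products
  have prodNegC : ∀ k : ℕ, m (-(k:ℤ)-1) - m (-(k:ℤ)-2)
      = (m 0 - m (-1)) * ∏ i ∈ Finset.range (k+1), (cF (sIter (-((i:ℤ)+1)) x) - 1)⁻¹ := by
    intro k
    induction k with
    | zero =>
      rw [Finset.prod_range_one]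
      have hc := cstep (-1)
      have hcp := cpos (-1)
      have hne : cF (sIter (-1) x) - 1 ≠ 0 := ne_of_gt hcp
      rw [show ((-1:ℤ)) + 1 = 0 by ring, show ((-1:ℤ)) - 1 = -2 by ring] at hc
      push_cast
      norm_num
      rw [hc, mul_comm (cF (sIter (-1) x) - 1), mul_inv_cancel_right₀ hne]
    | succ k ih =>
      have hc := cstep (-(k:ℤ)-2)
      have hcp := cpos (-(k:ℤ)-2)
      have hne : cF (sIter (-(k:ℤ)-2) x) - 1 ≠ 0 := ne_of_gt hcp
      rw [show (-(k:ℤ)-2) + 1 = -(k:ℤ)-1 by ring, show (-(k:ℤ)-2) - 1 = -(k:ℤ)-3 by ring] at hc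
      rw [Finset.prod_range_succ, ← mul_assoc]
      push_cast
      rw [show -((k:ℤ)+1)-1 = -(k:ℤ)-2 by ring, show -((k:ℤ)+1)-2 = -(k:ℤ)-3 by ring,
          show -((k:ℤ)+1+1) = -(k:ℤ)-2 by ring]
      rw [← ih, hc, mul_comm (cF (sIter (-(k:ℤ)-2) x) - 1), mul_inv_cancel_right₀ hne]
  have prodNegD : ∀ k : ℕ, n (-(k:ℤ)-2) - n (-(k:ℤ)-1)
      = (n (-1) - n 0) * ∏ i ∈ Finset.range (k+1), (dF (sIter (-((i:ℤ)+1)) x) - 1)⁻¹ := by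
    intro k
    induction k with
    | zero =>
      rw [Finset.prod_range_one]
      have hc := dstep (-1)
      have hcp := dpos (-1)
      have hne : dF (sIter (-1) x) - 1 ≠ 0 := ne_of_gt hcp
      rw [show ((-1:ℤ)) + 1 = 0 by ring, show ((-1:ℤ)) - 1 = -2 by ring] at hc
      push_cast
      norm_num
      rw [hc, mul_comm (dF (sIter (-1) x) - 1), mul_inv_cancel_right₀ hne]
    | succ k ih =>
      have hc := dstep (-(k:ℤ)-2)
      have hcp := dpos (-(k:ℤ)-2)
      have hne : dF (sIter (-(k:ℤ)-2) x) - 1 ≠ 0 := ne_of_gt hcp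
      rw [show (-(k:ℤ)-2) + 1 = -(k:ℤ)-1 by ring, show (-(k:ℤ)-2) - 1 = -(k:ℤ)-3 by ring] at hc
      rw [Finset.prod_range_succ, ← mul_assoc]
      push_cast
      rw [show -((k:ℤ)+1)-1 = -(k:ℤ)-2 by ring, show -((k:ℤ)+1)-2 = -(k:ℤ)-3 by ring,
          show -((k:ℤ)+1+1) = -(k:ℤ)-2 by ring]
      rw [← ih, hc, mul_comm (dF (sIter (-(k:ℤ)-2) x) - 1), mul_inv_cancel_right₀ hne]
  -- telescoping sums
  have sumP : ∀ k : ℕ, m (k:ℤ) - m (-1) = (m 0 - m (-1)) * Pfun x k := by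
    intro k
    induction k with
    | zero => simp [Pfun]
    | succ k ih =>
      have hp := prodC k
      show m ((k+1 : ℕ):ℤ) - m (-1) = (m 0 - m (-1)) * (Pfun x k + _)
      push_cast
      push_cast at hp
      rw [mul_add, ← ih, ← hp]
      ring
  have sumS : ∀ k : ℕ, n (-1) - n (k:ℤ) = (n (-1) - n 0) * Sfun x k := by
    intro k
    induction k with
    | zero => simp [Sfun]
    | succ k ih =>
      have hp := prodD k
      show n (-1) - n ((k+1 : ℕ):ℤ) = (n (-1) - n 0) * (Sfun x k + _)
      push_cast
      push_cast at hp
      rw [mul_add, ← ih, ← hp]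
      ring
  have sumQ : ∀ k : ℕ, m (-1) - m (-(k:ℤ)-1) = (m 0 - m (-1)) * Qfun x (k+1) := by
    intro k
    induction k with
    | zero => norm_num [Qfun]
    | succ k ih =>
      have hp := prodNegC k
      show m (-1) - m (-((k+1:ℕ):ℤ)-1) = (m 0 - m (-1)) * (Qfun x (k+1) + _)
      push_cast
      push_cast at hp
      rw [mul_add, ← ih, ← hp]
      rw [show -((k:ℤ)+1)-1 = -(k:ℤ)-2 by ring]
      ring
  have sumT : ∀ k : ℕ, n (-(k:ℤ)-1) - n (-1) = (n (-1) - n 0) * Tfun x (k+1) := by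
    intro k
    induction k with
    | zero => norm_num [Tfun]
    | succ k ih =>
      have hp := prodNegD k
      show n (-((k+1:ℕ):ℤ)-1) - n (-1) = (n (-1) - n 0) * (Tfun x (k+1) + _)
      push_cast
      push_cast at hp
      rw [mul_add, ← ih, ← hp]
      rw [show -((k:ℤ)+1)-1 = -(k:ℤ)-2 by ring]
      ring
  -- positivity of P + Q
  have Ppos : ∀ k : ℕ, 1 ≤ Pfun x k := by
    intro k
    induction k with
    | zero => simp [Pfun]
    | succ k ih =>
      show 1 ≤ Pfun x k + _
      have : 0 < ∏ i ∈ Finset.range (k+1), (cF (sIter i x) - 1) :=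
        Finset.prod_pos fun i _ => cpos i
      linarith
  have Qnonneg : ∀ k : ℕ, 0 ≤ Qfun x (k+1) := by
    intro k
    induction k with
    | zero => norm_num [Qfun]
    | succ k ih =>
      show 0 ≤ Qfun x (k+1) + _
      have : 0 < ∏ i ∈ Finset.range (k+1), (cF (sIter (-((i:ℤ)+1)) x) - 1)⁻¹ :=
        Finset.prod_pos fun i _ => inv_pos.mpr (cpos _)
      linarith
  -- final assembly
  intro k l hl
  obtain ⟨l', rfl⟩ : ∃ l', l = l' + 1 := ⟨l - 1, by omega⟩
  have hden : 0 < m 0 - m (-1) := hU' 0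
  have hnum : 0 < n (-1) - n 0 := hV' 0
  have hx' : x * (m 0 - m (-1)) = n (-1) - n 0 := by
    rw [hx]; field_simp
  have hA : n (-((l'+1:ℕ):ℤ)) - n (k:ℤ) = (n (-1) - n 0) * (Sfun x k + Tfun x (l'+1)) := by
    have h1 := sumS k
    have h2 := sumT l'
    push_cast at h2 ⊢
    rw [show -((l':ℤ)+1) = -(l':ℤ)-1 by ring]
    rw [mul_add, ← h1, ← h2]
    ring
  have hB : m (k:ℤ) - m (-((l'+1:ℕ):ℤ)) = (m 0 - m (-1)) * (Pfun x k + Qfun x (l'+1)) := by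
    have h1 := sumP k
    have h2 := sumQ l'
    push_cast at h2 ⊢
    rw [show -((l':ℤ)+1) = -(l':ℤ)-1 by ring]
    rw [mul_add, ← h1, ← h2]
    ring
  have hPQ : 0 < Pfun x k + Qfun x (l'+1) := by
    have := Ppos k; have := Qnonneg l'; linarith
  rw [hA, hB, div_eq_div_iff (by positivity) (ne_of_gt hPQ)]
  linear_combination (-(Sfun x k + Tfun x (l'+1))) * (Pfun x k + Qfun x (l'+1)) * hx'
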